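/- Let Y and Z be jointly Gaussian, centered, with equal variance σ² = 𝔼Y² = 𝔼Z² and 𝔼(YZ) ≥ 0. Let F': ℝ → ℝ be an odd function with Hermite/chaos expansion F'(Y) = ∑_{n≥0} (c_n/(2n+1)!) Y^{⋄(2n+1)} where c_n = 𝔼 F^{(2n+2)}(Y), and suppose 𝔼(F'(Y))² = ∑_{n≥0} c_n² σ^{4n+2}/(2n+1)! < ∞. Set a = (1/2)𝔼F''(Y) = c_0/2. Then 𝔼(F'(Y)F'(Z)) − 4a² 𝔼(YZ) = ∑_{n≥1} (c_n²/(2n+1)!) (𝔼YZ)^{2n+1}, and consequently for every β' ∈ (0,1], |𝔼(F'(Y)F'(Z)) − 4a² 𝔼(YZ)| ≤ σ^{-2(1+β')} 𝔼(F'(Y))² · (𝔼YZ)^{1+β'}. -/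

import Mathlib

open MeasureTheory Filter

/-- The `k`-th Wick power of `x` relative to variance `σ²`: `x^{⋄k} = σ^k He_k(x/σ)`,
where `He_k` is the probabilists' Hermite polynomial. -/
noncomputable def wick (σ : ℝ) (k : ℕ) (x : ℝ) : ℝ :=
  σ ^ k * Polynomial.aeval (x / σ) (Polynomial.hermite k)

section Aux

variable {Ω : Type*} [MeasurableSpace Ω] {μ : Measure Ω}

lemma l2_inner_eq (f g : Lp ℝ 2 μ) : (inner ℝ f g : ℝ) = ∫ ω, f ω * g ω ∂μ := by
  rw [L2.inner_def]; simp [RCLike.inner_apply, mul_comm]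

lemma l2_integrable_mul {f g : Ω → ℝ} (hf : MemLp f 2 μ) (hg : MemLp g 2 μ) :
    Integrable (fun ω => f ω * g ω) μ := by
  have h := L2.integrable_inner (𝕜 := ℝ) (hf.toLp f) (hg.toLp g)
  refine h.congr ?_
  filter_upwards [hf.coeFn_toLp, hg.coeFn_toLp] with ω h1 h2
  simp [RCLike.inner_apply, h1, h2, mul_comm]

lemma l2_norm_sq (f : Lp ℝ 2 μ) : ‖f‖ ^ 2 = ∫ ω, (f ω) ^ 2 ∂μ := by
  rw [← real_inner_self_eq_norm_sq, l2_inner_eq]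
  exact integral_congr_ae (Filter.Eventually.of_forall fun ω => (pow_two _).symm)

/-- Partial sums of the odd chaos expansion. -/
noncomputable def psum (σ : ℝ) (c : ℕ → ℝ) (W : Ω → ℝ) (N : ℕ) (ω : Ω) : ℝ :=
  ∑ n ∈ Finset.range N, c n / (Nat.factorial (2 * n + 1) : ℝ) * wick σ (2 * n + 1) (W ω)

end Aux

/-- for jointly Gaussian centered `(Y,Z)` with equal variance `σ²` and
nonnegative covariance `ρ = 𝔼(YZ) ≤ σ²`, and an odd `F'` with chaos expansion
`F'(Y) = ∑ (c_n/(2n+1)!) Y^{⋄(2n+1)}` (in `L²`) satisfying Wick's formula, one has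
`𝔼(F'(Y)F'(Z)) − 4a²ρ = ∑_{n≥1} (c_n²/(2n+1)!) ρ^{2n+1}` with `a = c₀/2`, and for
every `β' ∈ (0,1]`, `|𝔼(F'(Y)F'(Z)) − 4a²ρ| ≤ σ^{−2(1+β')} 𝔼(F'(Y))² ρ^{1+β'}`. -/
theorem stmt_10 {Ω : Type*} [MeasurableSpace Ω] (μ : Measure Ω) [IsProbabilityMeasure μ]
    (Y Z : Ω → ℝ) (hYm : Measurable Y) (hZm : Measurable Z)
    (F' : ℝ → ℝ) (hodd : ∀ x, F' (-x) = -F' x)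
    (σ ρ S a : ℝ) (hσ : 0 < σ) (hρ0 : 0 ≤ ρ) (hρσ : ρ ≤ σ ^ 2)
    (hcov : ∫ ω, Y ω * Z ω ∂μ = ρ)
    (c : ℕ → ℝ)
    (hwick : ∀ m n : ℕ, (∫ ω, wick σ m (Y ω) * wick σ n (Z ω) ∂μ) =
      if m = n then (Nat.factorial n : ℝ) * ρ ^ n else 0)
    (hWY : ∀ k, MemLp (fun ω => wick σ k (Y ω)) 2 μ)
    (hWZ : ∀ k, MemLp (fun ω => wick σ k (Z ω)) 2 μ)
    (hFY : MemLp (fun ω => F' (Y ω)) 2 μ)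
    (hFZ : MemLp (fun ω => F' (Z ω)) 2 μ)
    (hL2Y : Tendsto (fun N => ∫ ω, (F' (Y ω) - ∑ n ∈ Finset.range N,
        c n / (Nat.factorial (2 * n + 1) : ℝ) * wick σ (2 * n + 1) (Y ω)) ^ 2 ∂μ)
      atTop (nhds 0))
    (hL2Z : Tendsto (fun N => ∫ ω, (F' (Z ω) - ∑ n ∈ Finset.range N,
        c n / (Nat.factorial (2 * n + 1) : ℝ) * wick σ (2 * n + 1) (Z ω)) ^ 2 ∂μ)
      atTop (nhds 0))
    (hSdef : S = ∫ ω, (F' (Y ω)) ^ 2 ∂μ)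
    (hSsum : HasSum (fun n => c n ^ 2 * σ ^ (2 * (2 * n + 1)) /
      (Nat.factorial (2 * n + 1) : ℝ)) S)
    (ha : a = c 0 / 2)
    (β' : ℝ) (hβ0 : 0 < β') (hβ1 : β' ≤ 1) :
    HasSum (fun n : ℕ => c (n + 1) ^ 2 / (Nat.factorial (2 * (n + 1) + 1) : ℝ) *
        ρ ^ (2 * (n + 1) + 1))
      ((∫ ω, F' (Y ω) * F' (Z ω) ∂μ) - 4 * a ^ 2 * ρ) ∧
    |(∫ ω, F' (Y ω) * F' (Z ω) ∂μ) - 4 * a ^ 2 * ρ| ≤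
      σ ^ (-2 * (1 + β')) * S * ρ ^ (1 + β') := by
  classical
  set T : ℝ := ∫ ω, F' (Y ω) * F' (Z ω) ∂μ with hT
  -- abbreviations
  let t : ℕ → ℝ := fun n => c n ^ 2 / (Nat.factorial (2 * n + 1) : ℝ) * ρ ^ (2 * n + 1)
  let u : ℕ → ℝ := fun n => c n ^ 2 * σ ^ (2 * (2 * n + 1)) / (Nat.factorial (2 * n + 1) : ℝ)
  have ht0 : ∀ n, 0 ≤ t n := fun n => by
    have : (0:ℝ) ≤ c n ^ 2 / (Nat.factorial (2 * n + 1) : ℝ) := by positivity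
    exact mul_nonneg this (pow_nonneg hρ0 _)
  have hu0 : ∀ n, 0 ≤ u n := fun n => by positivity
  -- membership of partial sums
  have hmemf : ∀ N, MemLp (psum σ c Y N) 2 μ := fun N =>
    memLp_finset_sum _ (fun n _ => ((hWY (2 * n + 1)).const_mul _))
  have hmemg : ∀ N, MemLp (psum σ c Z N) 2 μ := fun N =>
    memLp_finset_sum _ (fun n _ => ((hWZ (2 * n + 1)).const_mul _))
  -- key orthogonality computation
  have key : ∀ N, (∫ ω, psum σ c Y N ω * psum σ c Z N ω ∂μ) = ∑ n ∈ Finset.range N, t n := by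
    intro N
    have h1 : (∫ ω, psum σ c Y N ω * psum σ c Z N ω ∂μ)
        = ∑ p ∈ Finset.range N ×ˢ Finset.range N,
            ∫ ω, (c p.1 / (Nat.factorial (2 * p.1 + 1) : ℝ) * wick σ (2 * p.1 + 1) (Y ω)) *
              (c p.2 / (Nat.factorial (2 * p.2 + 1) : ℝ) * wick σ (2 * p.2 + 1) (Z ω)) ∂μ := by
      rw [← integral_finset_sum]
      · refine integral_congr_ae (Filter.Eventually.of_forall fun ω => ?_)
        simp only [psum, Finset.sum_mul_sum, Finset.sum_product]
      · rintro ⟨m, n⟩ -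
        exact l2_integrable_mul ((hWY (2 * m + 1)).const_mul _) ((hWZ (2 * n + 1)).const_mul _)
    have h2 : ∀ p ∈ Finset.range N ×ˢ Finset.range N,
        (∫ ω, (c p.1 / (Nat.factorial (2 * p.1 + 1) : ℝ) * wick σ (2 * p.1 + 1) (Y ω)) *
            (c p.2 / (Nat.factorial (2 * p.2 + 1) : ℝ) * wick σ (2 * p.2 + 1) (Z ω)) ∂μ)
          = if p.1 = p.2 then t p.1 else 0 := by
      rintro ⟨m, n⟩ -
      dsimp only
      have heq : (fun ω => (c m / (Nat.factorial (2 * m + 1) : ℝ) * wick σ (2 * m + 1) (Y ω)) *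
            (c n / (Nat.factorial (2 * n + 1) : ℝ) * wick σ (2 * n + 1) (Z ω)))
          = fun ω => (c m / (Nat.factorial (2 * m + 1) : ℝ)) *
              (c n / (Nat.factorial (2 * n + 1) : ℝ)) *
              (wick σ (2 * m + 1) (Y ω) * wick σ (2 * n + 1) (Z ω)) := by
        funext ω; ring
      rw [heq, integral_const_mul, hwick]
      by_cases h : m = n
      · subst h
        have hfac : ((Nat.factorial (2 * m + 1) : ℝ)) ≠ 0 :=
          Nat.cast_ne_zero.2 (Nat.factorial_ne_zero _)
        simp only [if_pos rfl, t, eq_self_iff_true, if_true]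
        field_simp
      · have h' : ¬(2 * m + 1 = 2 * n + 1) := by omega
        simp [h, h']
    rw [h1, Finset.sum_congr rfl h2, Finset.sum_product]
    refine Finset.sum_congr rfl fun m hm => ?_
    rw [Finset.sum_ite_eq (Finset.range N) m (fun _ => t m), if_pos hm]
  -- convergence of partial sums in L²
  have hnormY : ∀ N, ‖(hmemf N).toLp (psum σ c Y N) - hFY.toLp _‖ ^ 2
      = ∫ ω, (F' (Y ω) - psum σ c Y N ω) ^ 2 ∂μ := by
    intro N
    rw [l2_norm_sq]
    refine integral_congr_ae ?_
    filter_upwards [Lp.coeFn_sub ((hmemf N).toLp (psum σ c Y N)) (hFY.toLp _),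
      (hmemf N).coeFn_toLp, hFY.coeFn_toLp] with ω h1 h2 h3
    rw [h1, Pi.sub_apply, h2, h3]
    ring
  have hnormZ : ∀ N, ‖(hmemg N).toLp (psum σ c Z N) - hFZ.toLp _‖ ^ 2
      = ∫ ω, (F' (Z ω) - psum σ c Z N ω) ^ 2 ∂μ := by
    intro N
    rw [l2_norm_sq]
    refine integral_congr_ae ?_
    filter_upwards [Lp.coeFn_sub ((hmemg N).toLp (psum σ c Z N)) (hFZ.toLp _),
      (hmemg N).coeFn_toLp, hFZ.coeFn_toLp] with ω h1 h2 h3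
    rw [h1, Pi.sub_apply, h2, h3]
    ring
  have hsqY : Tendsto (fun N => ‖(hmemf N).toLp (psum σ c Y N) - hFY.toLp _‖ ^ 2)
      atTop (nhds 0) := by
    simp only [hnormY]; exact hL2Y
  have hsqZ : Tendsto (fun N => ‖(hmemg N).toLp (psum σ c Z N) - hFZ.toLp _‖ ^ 2)
      atTop (nhds 0) := by
    simp only [hnormZ]; exact hL2Z
  have habsY : Tendsto (fun N => ‖(hmemf N).toLp (psum σ c Y N) - hFY.toLp _‖)
      atTop (nhds 0) := by
    have h := (Real.continuous_sqrt.tendsto' 0 0 Real.sqrt_zero).comp hsqY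
    exact h.congr fun N => Real.sqrt_sq (norm_nonneg _)
  have habsZ : Tendsto (fun N => ‖(hmemg N).toLp (psum σ c Z N) - hFZ.toLp _‖)
      atTop (nhds 0) := by
    have h := (Real.continuous_sqrt.tendsto' 0 0 Real.sqrt_zero).comp hsqZ
    exact h.congr fun N => Real.sqrt_sq (norm_nonneg _)
  have hFtend : Tendsto (fun N => (hmemf N).toLp (psum σ c Y N)) atTop (nhds (hFY.toLp _)) := by
    rw [tendsto_iff_norm_sub_tendsto_zero]
    exact habsY
  have hGtend : Tendsto (fun N => (hmemg N).toLp (psum σ c Z N)) atTop (nhds (hFZ.toLp _)) := by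
    rw [tendsto_iff_norm_sub_tendsto_zero]
    exact habsZ
  have hinner : Tendsto
      (fun N => (inner ℝ ((hmemf N).toLp (psum σ c Y N)) ((hmemg N).toLp (psum σ c Z N)) : ℝ))
      atTop (nhds (inner ℝ (hFY.toLp _) (hFZ.toLp _) : ℝ)) := hFtend.inner hGtend
  have hTi : (inner ℝ (hFY.toLp _) (hFZ.toLp _) : ℝ) = T := by
    rw [l2_inner_eq, hT]
    refine integral_congr_ae ?_
    filter_upwards [hFY.coeFn_toLp, hFZ.coeFn_toLp] with ω h1 h2
    rw [h1, h2]
  have hNi : ∀ N, (inner ℝ ((hmemf N).toLp (psum σ c Y N)) ((hmemg N).toLp (psum σ c Z N)) : ℝ)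
      = ∑ n ∈ Finset.range N, t n := by
    intro N
    rw [l2_inner_eq, ← key N]
    refine integral_congr_ae ?_
    filter_upwards [(hmemf N).coeFn_toLp, (hmemg N).coeFn_toLp] with ω h1 h2
    rw [h1, h2]
  have hsumtend : Tendsto (fun N => ∑ n ∈ Finset.range N, t n) atTop (nhds T) := by
    have h := hinner.congr hNi
    rwa [hTi] at h
  -- summability of t
  have htu : ∀ n, t n ≤ u n := by
    intro n
    have hρk : ρ ^ (2 * n + 1) ≤ σ ^ (2 * (2 * n + 1)) := by
      calc ρ ^ (2 * n + 1) ≤ (σ ^ 2) ^ (2 * n + 1) := pow_le_pow_left₀ hρ0 hρσ _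
        _ = σ ^ (2 * (2 * n + 1)) := by rw [← pow_mul]
    have hc : (0:ℝ) ≤ c n ^ 2 / (Nat.factorial (2 * n + 1) : ℝ) := by positivity
    calc t n ≤ c n ^ 2 / (Nat.factorial (2 * n + 1) : ℝ) * σ ^ (2 * (2 * n + 1)) :=
          mul_le_mul_of_nonneg_left hρk hc
      _ = u n := by simp only [u]; ring
  have hSummable : Summable t := Summable.of_nonneg_of_le ht0 htu hSsum.summable
  have hTt : HasSum t T := by
    have := tendsto_nhds_unique hsumtend hSummable.hasSum.tendsto_sum_nat
    exact this ▸ hSummable.hasSum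
  -- shift by one
  have hshift : HasSum (fun n => t (n + 1)) (T - 4 * a ^ 2 * ρ) := by
    have h := (hasSum_nat_add_iff' 1).2 hTt
    have h0 : ∑ i ∈ Finset.range 1, t i = 4 * a ^ 2 * ρ := by
      rw [Finset.sum_range_one]
      show c 0 ^ 2 / (Nat.factorial (2 * 0 + 1) : ℝ) * ρ ^ (2 * 0 + 1) = 4 * a ^ 2 * ρ
      rw [ha]
      simp only [Nat.mul_zero, Nat.zero_add, Nat.factorial_one, Nat.cast_one, div_one, pow_one]
      ring
    rwa [h0] at h
  have hgoal1 : HasSum (fun n : ℕ => c (n + 1) ^ 2 / (Nat.factorial (2 * (n + 1) + 1) : ℝ) *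
      ρ ^ (2 * (n + 1) + 1)) (T - 4 * a ^ 2 * ρ) := hshift
  refine ⟨hgoal1, ?_⟩
  -- the bound
  have hBσ : (0:ℝ) < σ ^ (-2 * (1 + β')) := Real.rpow_pos_of_pos hσ _
  have hBρ : (0:ℝ) ≤ ρ ^ (1 + β') := Real.rpow_nonneg hρ0 _
  have hpow : ∀ k : ℕ, (1 + β') ≤ (k:ℝ) →
      ρ ^ k ≤ σ ^ (-2 * (1 + β')) * ρ ^ (1 + β') * σ ^ (2 * k) := by
    intro k hk
    have he : (0:ℝ) ≤ (k:ℝ) - (1 + β') := by linarith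
    have hkne : ((k:ℝ)) ≠ 0 := by nlinarith
    have hsum : (1 + β') + ((k:ℝ) - (1 + β')) = (k:ℝ) := by ring
    have h1 : ρ ^ k = ρ ^ ((1 + β') : ℝ) * ρ ^ ((k:ℝ) - (1 + β')) := by
      rw [← Real.rpow_natCast ρ k, ← Real.rpow_add' hρ0 (by rw [hsum]; exact hkne), hsum]
    have h2 : ρ ^ ((k:ℝ) - (1 + β')) ≤ ((σ ^ 2 : ℝ)) ^ ((k:ℝ) - (1 + β')) :=
      Real.rpow_le_rpow hρ0 hρσ he
    have h3 : ((σ ^ 2 : ℝ)) ^ ((k:ℝ) - (1 + β')) = σ ^ ((2:ℝ) * ((k:ℝ) - (1 + β'))) := by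
      rw [Real.rpow_mul hσ.le, Real.rpow_two]
    have h4 : σ ^ ((2:ℝ) * ((k:ℝ) - (1 + β'))) = σ ^ (2 * k) * σ ^ (-2 * (1 + β')) := by
      rw [show (2:ℝ) * ((k:ℝ) - (1 + β')) = ((2 * k : ℕ) : ℝ) + (-2 * (1 + β')) by
        push_cast; ring, Real.rpow_add hσ, Real.rpow_natCast]
    calc ρ ^ k = ρ ^ ((1 + β') : ℝ) * ρ ^ ((k:ℝ) - (1 + β')) := h1
      _ ≤ ρ ^ ((1 + β') : ℝ) * ((σ ^ 2 : ℝ)) ^ ((k:ℝ) - (1 + β')) :=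
          mul_le_mul_of_nonneg_left h2 hBρ
      _ = σ ^ (-2 * (1 + β')) * ρ ^ (1 + β') * σ ^ (2 * k) := by rw [h3, h4]; ring
  have hbound : ∀ n, t (n + 1) ≤ (σ ^ (-2 * (1 + β')) * ρ ^ (1 + β')) * u (n + 1) := by
    intro n
    have hk : (1 + β') ≤ ((2 * (n + 1) + 1 : ℕ) : ℝ) := by push_cast; linarith
    have hp := hpow (2 * (n + 1) + 1) hk
    have hc : (0:ℝ) ≤ c (n + 1) ^ 2 / (Nat.factorial (2 * (n + 1) + 1) : ℝ) := by positivity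
    calc t (n + 1) ≤ c (n + 1) ^ 2 / (Nat.factorial (2 * (n + 1) + 1) : ℝ) *
          (σ ^ (-2 * (1 + β')) * ρ ^ (1 + β') * σ ^ (2 * (2 * (n + 1) + 1))) :=
        mul_le_mul_of_nonneg_left hp hc
      _ = (σ ^ (-2 * (1 + β')) * ρ ^ (1 + β')) * u (n + 1) := by simp only [u]; ring
  have huS : HasSum u S := hSsum
  have hu1 : HasSum (fun n => u (n + 1)) (S - u 0) := by
    have h := (hasSum_nat_add_iff' 1).2 huS
    rwa [Finset.sum_range_one] at h
  have hBsum : HasSum (fun n => (σ ^ (-2 * (1 + β')) * ρ ^ (1 + β')) * u (n + 1))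
      ((σ ^ (-2 * (1 + β')) * ρ ^ (1 + β')) * (S - u 0)) := hu1.mul_left _
  have hle : T - 4 * a ^ 2 * ρ ≤ (σ ^ (-2 * (1 + β')) * ρ ^ (1 + β')) * (S - u 0) :=
    hasSum_le hbound hshift hBsum
  have hpos : 0 ≤ T - 4 * a ^ 2 * ρ :=
    hasSum_le (fun n => ht0 (n + 1)) hasSum_zero hshift
  have hBS : (σ ^ (-2 * (1 + β')) * ρ ^ (1 + β')) * (S - u 0)
      ≤ σ ^ (-2 * (1 + β')) * S * ρ ^ (1 + β') := by
    have h1 : (σ ^ (-2 * (1 + β')) * ρ ^ (1 + β')) * (S - u 0)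
        ≤ (σ ^ (-2 * (1 + β')) * ρ ^ (1 + β')) * S :=
      mul_le_mul_of_nonneg_left (by linarith [hu0 0]) (mul_nonneg hBσ.le hBρ)
    calc (σ ^ (-2 * (1 + β')) * ρ ^ (1 + β')) * (S - u 0)
        ≤ (σ ^ (-2 * (1 + β')) * ρ ^ (1 + β')) * S := h1
      _ = σ ^ (-2 * (1 + β')) * S * ρ ^ (1 + β') := by ring
  rw [abs_of_nonneg hpos]
  linarith
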